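/- The matrix-valued function P^∞ is holomorphic on ℂ∖([−1,1] ∪ {−iy : y ≥ 0}); in particular, for every z in this set one has (z−1)/(z+1) ∉ (−∞,0], D(z) ∉ (−∞,0], (−i+r(z))/z ∉ (−∞,0], and z + r(z) ∉ {−iy : y ≥ 0}, so that all the logarithms occurring in the definition of P^∞ are holomorphic at z. -/

import Mathlib

open Complex Filter Set Topology Matrix

/-- Principal branch of √(z²−1), holomorphic on ℂ∖[−1,1]. -/
noncomputable def rr (z : ℂ) : ℂ :=
  Complex.exp ((1 / 2 : ℂ) * Complex.log (z - 1)) *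
    Complex.exp ((1 / 2 : ℂ) * Complex.log (z + 1))

/-- D(z) = z/(1 + i√(z²−1)). -/
noncomputable def DD (z : ℂ) : ℂ := z / (1 + Complex.I * rr z)

/-- u^{σ₃} = diag(u, u⁻¹). -/
noncomputable def dS (u : ℂ) : Matrix (Fin 2) (Fin 2) ℂ := !![u, 0; 0, u⁻¹]

/-- Logarithm with branch cut along the negative imaginary axis:
ℒ(w) = Log(−i·w) + iπ/2, with argument in (−π/2, 3π/2]. -/
noncomputable def Lneg (w : ℂ) : ℂ :=
  Complex.log (-Complex.I * w) + Complex.I * (Real.pi : ℂ) / 2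

/-- The global parametrix P^∞(z). -/
noncomputable def Pinf (α μ : ℝ) (β : ℂ) (z : ℂ) : Matrix (Fin 2) (Fin 2) ℂ :=
  dS (Complex.exp (β * (Real.log 2 : ℂ))) *
  dS (Complex.exp (((Real.pi : ℂ) * Complex.I / 2) * ((μ : ℂ) - β))) *
  (((1 : ℂ) / (Real.sqrt 2 : ℂ)) • !![(1 : ℂ), -Complex.I; -Complex.I, 1]) *
  dS (Complex.exp ((1 / 4 : ℂ) * (Complex.log (z - 1) - Complex.log (z + 1)))) *
  (((1 : ℂ) / (Real.sqrt 2 : ℂ)) • !![(1 : ℂ), Complex.I; Complex.I, 1]) *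
  dS (Complex.exp (-β * Lneg (z + rr z))) *
  dS (Complex.exp (((Real.pi : ℂ) * Complex.I / 2) * β)) *
  dS (Complex.exp ((α : ℂ) * Complex.log ((-Complex.I + rr z) / z))) *
  dS (Complex.exp ((μ : ℂ) * Complex.log (DD z)))

/-- The domain ℂ∖([−1,1] ∪ {−iy : y ≥ 0}). -/
def SS : Set ℂ :=
  {z : ℂ | (¬∃ x : ℝ, x ∈ Set.Icc (-1 : ℝ) 1 ∧ z = (x : ℂ)) ∧
           (¬∃ y : ℝ, 0 ≤ y ∧ z = -(y : ℂ) * Complex.I)}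

/-- The negative real cut (−∞,0] ⊂ ℂ. -/
def negCut : Set ℂ := {u : ℂ | u.im = 0 ∧ u.re ≤ 0}

lemma mem_SS_iff {z : ℂ} : z ∈ SS ↔
    (¬(z.im = 0 ∧ -1 ≤ z.re ∧ z.re ≤ 1)) ∧ ¬(z.re = 0 ∧ z.im ≤ 0) := by
  constructor
  · rintro ⟨h1, h2⟩
    refine ⟨fun ⟨hi, hl, hr⟩ => h1 ⟨z.re, ⟨hl, hr⟩, by apply Complex.ext <;> simp [hi]⟩,
      fun ⟨hre, him⟩ => h2 ⟨-z.im, by linarith, by apply Complex.ext <;> simp [hre]⟩⟩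
  · rintro ⟨h1, h2⟩
    constructor
    · rintro ⟨x, ⟨hl, hr⟩, rfl⟩
      exact h1 ⟨by simp, by simpa using hl, by simpa using hr⟩
    · rintro ⟨y, hy, rfl⟩
      refine h2 ⟨by simp, by simp; linarith⟩

lemma rr_sq {z : ℂ} (h1 : z ≠ 1) (h2 : z ≠ -1) : rr z * rr z = (z - 1) * (z + 1) := by
  have e1 : z - 1 ≠ 0 := sub_ne_zero.mpr h1
  have e2 : z + 1 ≠ 0 := fun h => h2 (by linear_combination h)
  unfold rr
  rw [mul_mul_mul_comm, ← Complex.exp_add, ← Complex.exp_add,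
    show (1/2 : ℂ) * Complex.log (z-1) + (1/2 : ℂ) * Complex.log (z-1) = Complex.log (z-1) by ring,
    show (1/2 : ℂ) * Complex.log (z+1) + (1/2 : ℂ) * Complex.log (z+1) = Complex.log (z+1) by ring,
    Complex.exp_log e1, Complex.exp_log e2]

lemma rr_im_pos {z : ℂ} (hre : z.re = 0) (him : 0 < z.im) : 0 < (rr z).im := by
  have harg1 : |Complex.arg (z + 1)| < Real.pi / 2 :=
    Complex.abs_arg_lt_pi_div_two_iff.mpr (Or.inl (by simp [hre]))
  have hconj : z - 1 = -((starRingEnd ℂ) (z + 1)) := by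
    apply Complex.ext <;> simp [hre]
  have harg2 : Complex.arg (z - 1) = Real.pi - Complex.arg (z + 1) := by
    rw [hconj, Complex.arg_neg_eq_arg_add_pi_of_im_neg (by simp; linarith), Complex.arg_conj]
    rw [if_neg]
    · ring
    · intro h; rw [h] at harg1
      have := Real.pi_pos
      rw [abs_of_pos Real.pi_pos] at harg1; linarith
  unfold rr
  rw [← Complex.exp_add, Complex.exp_im]
  have him2 : ((1/2 : ℂ) * Complex.log (z-1) + (1/2 : ℂ) * Complex.log (z+1)).im = Real.pi / 2 := by
    simp [Complex.add_im, Complex.mul_im, Complex.log_im, harg2]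
    ring
  rw [him2, Real.sin_pi_div_two, mul_one]
  exact Real.exp_pos _

section basic
variable {z : ℂ} (hz : z ∈ SS)
include hz

lemma SS_ne_one : z ≠ 1 := by
  rintro rfl
  exact (mem_SS_iff.mp hz).1 ⟨by simp, by norm_num, by norm_num⟩

lemma SS_ne_negone : z ≠ -1 := by
  rintro rfl
  exact (mem_SS_iff.mp hz).1 ⟨by simp, by norm_num, by norm_num⟩

lemma SS_ne_zero : z ≠ 0 := by
  rintro rfl
  exact (mem_SS_iff.mp hz).2 ⟨by simp, by simp⟩

lemma SS_add_one_ne : z + 1 ≠ 0 := fun h => SS_ne_negone hz (by linear_combination h)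

lemma SS_sub_one_ne : z - 1 ≠ 0 := sub_ne_zero.mpr (SS_ne_one hz)

lemma claim1 : (z - 1) / (z + 1) ∉ negCut := by
  intro hm
  obtain ⟨him, hre⟩ := hm
  set w := (z - 1) / (z + 1) with hwdef
  have hw : z - 1 = w * (z + 1) := (div_eq_iff (SS_add_one_ne hz)).mp rfl
  have hIm := congrArg Complex.im hw
  have hRe := congrArg Complex.re hw
  simp [Complex.mul_im, Complex.mul_re, him] at hIm hRe
  have hzim : z.im = 0 := by
    rcases eq_or_ne z.im 0 with h | h
    · exact h
    · nlinarith [hIm]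
  refine (mem_SS_iff.mp hz).1 ⟨hzim, by nlinarith, by nlinarith⟩

lemma claim4 : ¬∃ y : ℝ, 0 ≤ y ∧ z + rr z = -(y : ℂ) * Complex.I := by
  rintro ⟨y, hy, heq⟩
  have hrr := rr_sq (SS_ne_one hz) (SS_ne_negone hz)
  have hr : rr z = -(y : ℂ) * Complex.I - z := by linear_combination heq
  have key : 2 * (y : ℂ) * Complex.I * z = ((y * y - 1 : ℝ) : ℂ) := by
    push_cast
    linear_combination hrr - (rr z + (-(y : ℂ) * Complex.I - z)) * hr - (y : ℂ) ^ 2 * Complex.I_sq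
  have hRe := congrArg Complex.re key
  have hIm := congrArg Complex.im key
  simp [Complex.mul_re, Complex.mul_im] at hRe hIm
  rcases eq_or_lt_of_le hy with h0 | hpos
  · rw [← h0] at hRe; norm_num at hRe
  · have hre0 : z.re = 0 := by
      rcases hIm with h | h
      · exact absurd h (by linarith)
      · exact h
    have himpos : 0 < z.im := by
      rcases le_or_gt z.im 0 with h | h
      · exact absurd ⟨hre0, h⟩ (mem_SS_iff.mp hz).2
      · exact h
    have hrp := rr_im_pos hre0 himpos
    have hIm2 := congrArg Complex.im hr
    simp [Complex.mul_im, Complex.mul_re] at hIm2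
    nlinarith

lemma denom_ne : 1 + Complex.I * rr z ≠ 0 := by
  intro h0
  have hrr := rr_sq (SS_ne_one hz) (SS_ne_negone hz)
  have hz2 : z * z = 0 := by
    linear_combination (1 - Complex.I * rr z) * h0 - hrr + rr z ^ 2 * Complex.I_sq
  exact SS_ne_zero hz (by simpa [mul_self_eq_zero] using hz2)

lemma claim2 : DD z ∉ negCut := by
  intro hm
  obtain ⟨him, hre⟩ := hm
  have hden := denom_ne hz
  have hw : z = DD z * (1 + Complex.I * rr z) := by
    rw [DD, div_mul_cancel₀ _ hden]
  have hwne : DD z ≠ 0 := fun h => SS_ne_zero hz (by rw [hw, h, zero_mul])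
  set wr := (DD z).re with hwr
  have hweq : DD z = ((wr : ℝ) : ℂ) := by apply Complex.ext <;> simp [him, hwr]
  rw [hweq] at hw
  have hr : (wr : ℂ) * rr z = -Complex.I * z + Complex.I * wr := by
    linear_combination Complex.I * hw + (wr : ℂ) * rr z * Complex.I_sq
  have hrr := rr_sq (SS_ne_one hz) (SS_ne_negone hz)
  have hz0 : z ≠ 0 := SS_ne_zero hz
  have key : z * (((wr * wr + 1 : ℝ)) : ℂ) = ((2 * wr : ℝ) : ℂ) := by
    have h2 : (wr : ℂ) ^ 2 * ((z - 1) * (z + 1)) =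
        (-Complex.I * z + Complex.I * wr) * (-Complex.I * z + Complex.I * wr) := by
      linear_combination ((wr : ℂ) * rr z + (-Complex.I * z + Complex.I * wr)) * hr - (wr : ℂ) ^ 2 * hrr
    have h3 : z * (z * ((wr : ℂ) * wr + 1) - 2 * wr) = 0 := by
      linear_combination h2 + (z - (wr : ℂ)) ^ 2 * Complex.I_sq
    rcases mul_eq_zero.mp h3 with h | h
    · exact absurd h hz0
    · push_cast; linear_combination h
  have hRe := congrArg Complex.re key
  have hIm := congrArg Complex.im key
  simp [Complex.mul_re, Complex.mul_im] at hRe hIm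
  have hzim : z.im = 0 := by
    rcases hIm with h | h
    · exact h
    · nlinarith
  refine (mem_SS_iff.mp hz).1 ⟨hzim,
    by nlinarith [sq_nonneg (1 + wr), show (0:ℝ) < wr * wr + 1 by nlinarith [mul_self_nonneg wr]],
    by nlinarith [sq_nonneg (1 - wr), show (0:ℝ) < wr * wr + 1 by nlinarith [mul_self_nonneg wr]]⟩

lemma claim3 : (-Complex.I + rr z) / z ∉ negCut := by
  intro hm
  obtain ⟨him, hre⟩ := hm
  have hz0 : z ≠ 0 := SS_ne_zero hz
  set w := (-Complex.I + rr z) / z with hwdef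
  have hw : -Complex.I + rr z = w * z := (div_eq_iff hz0).mp rfl
  set wr := w.re with hwr
  have hweq : w = ((wr : ℝ) : ℂ) := by apply Complex.ext <;> simp [him, hwr]
  rw [hweq] at hw
  have hr : rr z = Complex.I + (wr : ℂ) * z := by linear_combination hw
  have hrr := rr_sq (SS_ne_one hz) (SS_ne_negone hz)
  have key : z * (((1 - wr * wr : ℝ)) : ℂ) = 2 * Complex.I * ((wr : ℝ) : ℂ) := by
    have h3 : z * (z * ((1 : ℂ) - (wr : ℂ) * wr) - 2 * Complex.I * wr) = 0 := by
      linear_combination -hrr + (rr z + Complex.I + (wr : ℂ) * z) * hr + Complex.I_sq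
    rcases mul_eq_zero.mp h3 with h | h
    · exact absurd h hz0
    · push_cast; linear_combination h
  have hRe := congrArg Complex.re key
  have hIm := congrArg Complex.im key
  simp [Complex.mul_re, Complex.mul_im] at hRe hIm
  rcases lt_trichotomy (wr * wr) 1 with h1 | h1 | h1
  · have hre0 : z.re = 0 := hRe.resolve_right (by intro h; linarith)
    have hzim : z.im ≤ 0 := by
      by_contra hc
      push_neg at hc
      nlinarith [mul_pos hc (show (0:ℝ) < 1 - wr * wr by linarith)]
    exact (mem_SS_iff.mp hz).2 ⟨hre0, hzim⟩
  · have h2 : (2:ℝ) * wr = 0 := by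
      rw [show (1:ℝ) - wr * wr = 0 by linarith] at hIm
      simpa using hIm.symm
    have hw0 : wr = 0 := by linarith
    rw [hw0] at h1; norm_num at h1
  · have hre0 : z.re = 0 := hRe.resolve_right (by intro h; linarith)
    have himpos : 0 < z.im := by
      by_contra hc
      push_neg at hc
      nlinarith [mul_nonneg (neg_nonneg.mpr hc) (show (0:ℝ) ≤ wr * wr - 1 by linarith)]
    have hrp := rr_im_pos hre0 himpos
    have hIm2 := congrArg Complex.im hr
    simp [Complex.mul_im, Complex.mul_re, hre0] at hIm2
    have hp : 0 < 1 + wr * z.im := by rw [hIm2] at hrp; linarith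
    nlinarith [mul_pos hp (show (0:ℝ) < wr * wr - 1 by linarith),
      show wr * (z.im * (1 - wr * wr)) = wr * (2 * wr) from by rw [hIm]]

lemma arg_in_Ioc : Complex.arg (z - 1) - Complex.arg (z + 1) ∈ Set.Ioc (-Real.pi) Real.pi := by
  have hpi := Real.pi_pos
  rcases lt_trichotomy z.im 0 with h | h | h
  · have h1 : Complex.arg (z - 1) < 0 := Complex.arg_neg_iff.mpr (by simpa using h)
    have h2 : Complex.arg (z + 1) < 0 := Complex.arg_neg_iff.mpr (by simpa using h)
    have h3 := Complex.neg_pi_lt_arg (z - 1)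
    have h4 := Complex.neg_pi_lt_arg (z + 1)
    constructor <;> linarith
  · have hre : z.re < -1 ∨ 1 < z.re := by
      by_contra hc
      push_neg at hc
      exact (mem_SS_iff.mp hz).1 ⟨h, hc.1, hc.2⟩
    rcases hre with h5 | h5
    · have h1 : Complex.arg (z - 1) = Real.pi :=
        Complex.arg_eq_pi_iff.mpr ⟨by simp; linarith, by simpa using h⟩
      have h2 : Complex.arg (z + 1) = Real.pi :=
        Complex.arg_eq_pi_iff.mpr ⟨by simp; linarith, by simpa using h⟩
      rw [h1, h2]
      simpa using ⟨hpi, le_of_lt hpi⟩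
    · have h1 : Complex.arg (z - 1) = 0 :=
        Complex.arg_eq_zero_iff.mpr ⟨by simp; linarith, by simpa using h⟩
      have h2 : Complex.arg (z + 1) = 0 :=
        Complex.arg_eq_zero_iff.mpr ⟨by simp; linarith, by simpa using h⟩
      rw [h1, h2]
      simpa using ⟨hpi, le_of_lt hpi⟩
  · have h1a : 0 ≤ Complex.arg (z - 1) := Complex.arg_nonneg_iff.mpr (by simp; linarith)
    have h2a : 0 ≤ Complex.arg (z + 1) := Complex.arg_nonneg_iff.mpr (by simp; linarith)
    have h1b : Complex.arg (z - 1) < Real.pi :=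
      lt_of_le_of_ne (Complex.arg_le_pi _) (fun hc => by
        have := (Complex.arg_eq_pi_iff.mp hc).2
        simp at this; linarith)
    have h2b : Complex.arg (z + 1) < Real.pi :=
      lt_of_le_of_ne (Complex.arg_le_pi _) (fun hc => by
        have := (Complex.arg_eq_pi_iff.mp hc).2
        simp at this; linarith)
    constructor <;> linarith

lemma log_sub_log : Complex.log (z - 1) - Complex.log (z + 1) =
    Complex.log ((z - 1) / (z + 1)) := by
  have h1 := SS_sub_one_ne hz
  have h2 := SS_add_one_ne hz
  have harg : Complex.arg ((z - 1) / (z + 1)) = Complex.arg (z - 1) - Complex.arg (z + 1) := by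
    have h := Complex.arg_div_coe_angle h1 h2
    rw [← Real.Angle.coe_sub] at h
    rw [Complex.arg_coe_angle_eq_iff_eq_toReal.mp h,
      Real.Angle.toReal_coe_eq_self_iff_mem_Ioc.mpr (arg_in_Ioc hz)]
  apply Complex.ext
  · simp only [Complex.sub_re, Complex.log_re, map_div₀, norm_div]
    rw [Real.log_div (norm_ne_zero_iff.mpr h1) (norm_ne_zero_iff.mpr h2)]
  · simp only [Complex.sub_im, Complex.log_im, harg]

lemma rr_eq : rr z = (z + 1) * Complex.exp ((1/2 : ℂ) * Complex.log ((z - 1) / (z + 1))) := by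
  calc rr z = Complex.exp ((1/2 : ℂ) * Complex.log (z-1) + (1/2 : ℂ) * Complex.log (z+1)) := by
        rw [rr, Complex.exp_add]
    _ = Complex.exp (Complex.log (z+1)) *
        Complex.exp ((1/2 : ℂ) * (Complex.log (z-1) - Complex.log (z+1))) := by
        rw [← Complex.exp_add]; congr 1; ring
    _ = (z + 1) * Complex.exp ((1/2 : ℂ) * Complex.log ((z - 1) / (z + 1))) := by
        rw [Complex.exp_log (SS_add_one_ne hz), log_sub_log hz]

end basic

lemma mem_slit_of_not_negCut {u : ℂ} (h : u ∉ negCut) : u ∈ Complex.slitPlane := by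
  rw [Complex.mem_slitPlane_iff]
  by_contra hc
  push_neg at hc
  exact h ⟨hc.2, hc.1⟩

lemma slit_of_claim4 {w : ℂ} (h : ¬∃ y : ℝ, 0 ≤ y ∧ w = -(y : ℂ) * Complex.I) :
    -Complex.I * w ∈ Complex.slitPlane := by
  rw [Complex.mem_slitPlane_iff]
  by_contra hc
  push_neg at hc
  obtain ⟨h1, h2⟩ := hc
  simp [Complex.mul_re, Complex.mul_im] at h1 h2
  refine h ⟨-w.im, by linarith, ?_⟩
  apply Complex.ext <;> simp [Complex.mul_re, Complex.mul_im] <;> linarith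

lemma rr_diffOn : DifferentiableOn ℂ rr SS := by
  refine DifferentiableOn.congr (f := fun z => (z + 1) *
    Complex.exp ((1/2 : ℂ) * Complex.log ((z - 1) / (z + 1)))) ?_ (fun x hx => rr_eq hx)
  intro z hz
  have hd : DifferentiableAt ℂ (fun z : ℂ => (z - 1) / (z + 1)) z :=
    DifferentiableAt.div (by fun_prop) (by fun_prop) (SS_add_one_ne hz)
  exact (((differentiableAt_id.add_const 1).mul
    (((hd.clog (mem_slit_of_not_negCut (claim1 hz))).const_mul _).cexp))).differentiableWithinAt

lemma diff_quarter : DifferentiableOn ℂ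
    (fun z => Complex.exp ((1 / 4 : ℂ) * (Complex.log (z - 1) - Complex.log (z + 1)))) SS := by
  refine DifferentiableOn.congr (f := fun z =>
    Complex.exp ((1 / 4 : ℂ) * Complex.log ((z - 1) / (z + 1)))) ?_
    (fun x hx => by rw [log_sub_log hx])
  intro z hz
  have hd : DifferentiableAt ℂ (fun z : ℂ => (z - 1) / (z + 1)) z :=
    DifferentiableAt.div (by fun_prop) (by fun_prop) (SS_add_one_ne hz)
  exact (((hd.clog (mem_slit_of_not_negCut (claim1 hz))).const_mul _).cexp).differentiableWithinAt

lemma diff_Lneg (β : ℂ) : DifferentiableOn ℂ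
    (fun z => Complex.exp (-β * Lneg (z + rr z))) SS := by
  intro z hz
  have h1 : DifferentiableWithinAt ℂ (fun z => z + rr z) SS z :=
    (differentiableWithinAt_id.add (rr_diffOn z hz))
  have h2 : DifferentiableWithinAt ℂ (fun z => -Complex.I * (z + rr z)) SS z := h1.const_mul _
  have h3 : DifferentiableWithinAt ℂ (fun z => Lneg (z + rr z)) SS z := by
    unfold Lneg
    exact (h2.clog (slit_of_claim4 (claim4 hz))).add_const _
  exact (h3.const_mul _).cexp

lemma diff_alpha (α : ℝ) : DifferentiableOn ℂ
    (fun z => Complex.exp ((α : ℂ) * Complex.log ((-Complex.I + rr z) / z))) SS := by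
  intro z hz
  have h1 : DifferentiableWithinAt ℂ (fun z => (-Complex.I + rr z) / z) SS z :=
    ((differentiableWithinAt_const _).add (rr_diffOn z hz)).div
      differentiableWithinAt_id (SS_ne_zero hz)
  exact ((h1.clog (mem_slit_of_not_negCut (claim3 hz))).const_mul _).cexp

lemma diff_mu (μ : ℝ) : DifferentiableOn ℂ
    (fun z => Complex.exp ((μ : ℂ) * Complex.log (DD z))) SS := by
  intro z hz
  have h1 : DifferentiableWithinAt ℂ DD SS z := by
    unfold DD
    exact differentiableWithinAt_id.div
      ((differentiableWithinAt_const _).add ((rr_diffOn z hz).const_mul _)) (denom_ne hz)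
  exact ((h1.clog (mem_slit_of_not_negCut (claim2 hz))).const_mul _).cexp

lemma dS_entry_diff {g : ℂ → ℂ} (h : DifferentiableOn ℂ (fun z => Complex.exp (g z)) SS) :
    ∀ i j : Fin 2, DifferentiableOn ℂ (fun z => dS (Complex.exp (g z)) i j) SS := by
  intro i j
  fin_cases i <;> fin_cases j <;> simp [dS]
  · exact h
  · exact h.inv (fun x _ => Complex.exp_ne_zero _)

lemma const_entry_diff (M : Matrix (Fin 2) (Fin 2) ℂ) :
    ∀ i j : Fin 2, DifferentiableOn ℂ (fun _ : ℂ => M i j) SS :=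
  fun _ _ => differentiableOn_const _

lemma mul_entry_diff {M N : ℂ → Matrix (Fin 2) (Fin 2) ℂ}
    (hM : ∀ i j : Fin 2, DifferentiableOn ℂ (fun z => M z i j) SS)
    (hN : ∀ i j : Fin 2, DifferentiableOn ℂ (fun z => N z i j) SS) :
    ∀ i j : Fin 2, DifferentiableOn ℂ (fun z => (M z * N z) i j) SS := by
  intro i j
  simp only [Matrix.mul_apply]
  exact DifferentiableOn.fun_sum fun k _ => (hM i k).mul (hN k j)

theorem stmt11 (α μ : ℝ) (β : ℂ) (hα : -(1 / 2) < α) (hβ : β.re = 0) :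
    (∀ z ∈ SS,
      (z - 1) / (z + 1) ∉ negCut ∧
      DD z ∉ negCut ∧
      (-Complex.I + rr z) / z ∉ negCut ∧
      ¬∃ y : ℝ, 0 ≤ y ∧ z + rr z = -(y : ℂ) * Complex.I) ∧
    (∀ i j : Fin 2, DifferentiableOn ℂ (fun z => Pinf α μ β z i j) SS) := by
  constructor
  · exact fun z hz => ⟨claim1 hz, claim2 hz, claim3 hz, claim4 hz⟩
  · intro i j
    simp only [Pinf]
    exact mul_entry_diff
      (mul_entry_diff
        (mul_entry_diff
          (mul_entry_diff
            (mul_entry_diff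
              (mul_entry_diff
                (mul_entry_diff
                  (mul_entry_diff
                    (const_entry_diff _)
                    (const_entry_diff _))
                  (const_entry_diff _))
                (dS_entry_diff diff_quarter))
              (const_entry_diff _))
            (dS_entry_diff (diff_Lneg β)))
          (const_entry_diff _))
        (dS_entry_diff (diff_alpha α)))
      (dS_entry_diff (diff_mu μ)) i j
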